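/- (Gutt–Hutchings concave comparison) Let $f:[0,x_0]\to[0,\infty)$ be convex non-increasing with $f>0$ on $[0,x_0)$ and $f(x_0)=0$, defining the concave profile $\Omega=\{(x,y):0\le x\le x_0,\ 0\le y\le f(x)\}$. Define $c_k(\Omega)=\max\{[v]_\Omega : v=(v_1,v_2)\in\{1,\dots,k\}^2,\ v_1+v_2=k+1\}$ where $[v]_\Omega=\min\{\langle v,w\rangle : w\in\mathrm{graph}(f)\}$. Then there exists a triangle profile $\Upsilon\subseteq\Omega$ (the subgraph of an affine function $g\le f$ touching the graph of $f$) such that $c_k(\Upsilon)\ge c_k(\Omega)$ and $\mathrm{area}(\Upsilon)\le\mathrm{area}(\Omega)$; consequently $c_k(\Omega)/\sqrt{2\,\mathrm{area}(\Omega)} \le \sqrt{\lceil k/2\rceil\lceil(k+1)/2\rceil}$. -/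

import Mathlib

open MeasureTheory

/-- `ckE a k` : the `k`-th smallest element (with multiplicity) of the multiset of all
positive integer multiples of the entries of `a`; for a pair this is the `k`-th capacity of
the corresponding ellipsoid. -/
noncomputable def ckE {n : ℕ} (a : Fin n → ℝ) (k : ℕ) : ℝ :=
  sInf {c : ℝ | k ≤ {p : ℕ × Fin n | 1 ≤ p.1 ∧ (p.1 : ℝ) * a p.2 ≤ c}.ncard}

/-- The triangle profile with legs `a₁, a₂`: the profile of the ellipsoid `E(a₁,a₂)`. -/
def triangleProfile (a₁ a₂ : ℝ) : Set (ℝ × ℝ) :=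
  {p | 0 ≤ p.1 ∧ 0 ≤ p.2 ∧ p.1 / a₁ + p.2 / a₂ ≤ 1}

/-- (Gutt–Hutchings concave comparison)  For a concave toric profile `Ω`, the subgraph of a
convex non-increasing `f` with `f > 0` on `[0,x₀)` and `f(x₀) = 0`, with
`c_k(Ω) = max{[v]_Ω : v ∈ {1,…,k}², v₁+v₂ = k+1}` and `[v]_Ω = min{⟨v,w⟩ : w ∈ graph f}`,
there is a triangle profile `Υ ⊆ Ω` (the subgraph of an affine `g ≤ f`) with
`c_k(Υ) ≥ c_k(Ω)` and `area(Υ) ≤ area(Ω)`; consequently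
`c_k(Ω)/√(2 area Ω) ≤ √(⌈k/2⌉⌈(k+1)/2⌉)`. -/
private lemma ceil_half_nat (k : ℕ) : ⌈(k:ℝ)/2⌉₊ = (k+1)/2 := by
  rcases Nat.even_or_odd k with ⟨m, rfl⟩ | ⟨m, rfl⟩
  · have : ((m + m : ℕ):ℝ)/2 = (m:ℝ) := by push_cast; ring
    rw [this, Nat.ceil_natCast]; omega
  · have h1 : (2*m+1+1)/2 = m + 1 := by omega
    rw [h1, Nat.ceil_eq_iff (by omega)]
    constructor
    · push_cast; linarith
    · push_cast; linarith

private lemma prod_le_balanced (k v₁ v₂ : ℕ) (h1 : 1 ≤ v₁) (h2 : 1 ≤ v₂)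
    (hs : v₁ + v₂ = k+1) : v₁ * v₂ ≤ ((k+1)/2) * ((k+2)/2) := by
  set b := (k+1)/2 with hb
  set c := (k+2)/2 with hc
  have key : ∀ x y : ℕ, 1 ≤ x → x + y = k + 1 → x ≤ y → x * y ≤ b * c := by
    intro x y hx hxy hxle
    have hxb : x ≤ b := by omega
    have hyc : c ≤ y := by omega
    have hbc : b + c = k + 1 := by omega
    zify at *
    nlinarith [mul_nonneg (by omega : (0:ℤ) ≤ b - x) (by omega : (0:ℤ) ≤ y - b)]
  rcases le_total v₁ v₂ with h | h
  · exact key v₁ v₂ h1 hs h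
  · rw [mul_comm]; exact key v₂ v₁ h2 (by omega) h

private lemma triangle_vol_lb (a₁ a₂ : ℝ) (h1 : 0 < a₁) (h2 : 0 < a₂) :
    ENNReal.ofReal (a₁ * a₂ / 2) ≤ volume (triangleProfile a₁ a₂) := by
  set L : ℝ → ℝ := fun x => a₂ - a₂/a₁ * x with hL
  have hLx : ∀ x, 0 ≤ x → x ≤ a₁ → 0 ≤ L x := by
    intro x hx hxa
    have : a₂/a₁ * x ≤ a₂ := by
      rw [div_mul_eq_mul_div, div_le_iff₀ h1]; nlinarith
    simp only [hL]; linarith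
  have hsub : regionBetween (fun _ => (0:ℝ)) L (Set.Ioo 0 a₁) ⊆ triangleProfile a₁ a₂ := by
    rintro ⟨x, y⟩ ⟨hx, hy⟩
    simp only [Set.mem_Ioo] at hx
    simp only [Set.mem_Ioo, hL] at hy
    refine ⟨le_of_lt hx.1, le_of_lt hy.1, ?_⟩
    show x / a₁ + y / a₂ ≤ 1
    rw [div_add_div _ _ (ne_of_gt h1) (ne_of_gt h2), div_le_one (by positivity)]
    have hy2 : y ≤ a₂ - a₂/a₁ * x := le_of_lt hy.2
    have e : (a₂ - a₂/a₁ * x) * a₁ = a₁ * a₂ - x * a₂ := by field_simp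
    nlinarith
  have hint : IntegrableOn L (Set.Ioo 0 a₁) := by
    have : Continuous L := by fun_prop
    exact (this.integrableOn_Icc (a := 0) (b := a₁)).mono_set Set.Ioo_subset_Icc_self
  have h0int : IntegrableOn (fun _ => (0:ℝ)) (Set.Ioo 0 a₁) := (integrableOn_const_iff (C := (0:ℝ))).mpr (Or.inl enorm_zero)
  have hvol := volume_regionBetween_eq_integral h0int hint measurableSet_Ioo
    (fun x hx => hLx x (le_of_lt (Set.mem_Ioo.mp hx).1) (le_of_lt (Set.mem_Ioo.mp hx).2))
  simp only [Pi.sub_apply, sub_zero] at hvol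
  have hcalc : (∫ y in Set.Ioo 0 a₁, L y) = a₁ * a₂ / 2 := by
    rw [← MeasureTheory.integral_Ioc_eq_integral_Ioo,
        ← intervalIntegral.integral_of_le (le_of_lt h1), hL]
    rw [intervalIntegral.integral_sub intervalIntegrable_const (by
      apply IntervalIntegrable.const_mul; exact intervalIntegral.intervalIntegrable_id)]
    rw [intervalIntegral.integral_const, intervalIntegral.integral_const_mul, integral_id]
    field_simp
    ring
  calc ENNReal.ofReal (a₁ * a₂ / 2)
      = volume.prod volume (regionBetween (fun _ => (0:ℝ)) L (Set.Ioo 0 a₁)) := by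
        rw [hvol, hcalc]
    _ = volume (regionBetween (fun _ => (0:ℝ)) L (Set.Ioo 0 a₁)) := by
        rw [← Measure.volume_eq_prod]
    _ ≤ volume (triangleProfile a₁ a₂) := measure_mono hsub

set_option maxHeartbeats 1000000 in
theorem stmt13 (k : ℕ) (hk : 1 ≤ k) (x₀ : ℝ) (hx₀ : 0 < x₀) (f : ℝ → ℝ)
    (hconv : ConvexOn ℝ (Set.Icc 0 x₀) f)
    (hanti : AntitoneOn f (Set.Icc 0 x₀))
    (hpos : ∀ x ∈ Set.Ico 0 x₀, 0 < f x)
    (hend : f x₀ = 0) :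
    ∃ a₁ a₂ : ℝ, 0 < a₁ ∧ 0 < a₂ ∧
      triangleProfile a₁ a₂ ⊆ {p : ℝ × ℝ | 0 ≤ p.1 ∧ p.1 ≤ x₀ ∧ 0 ≤ p.2 ∧ p.2 ≤ f p.1} ∧
      sSup {y : ℝ | ∃ v₁ v₂ : ℕ, 1 ≤ v₁ ∧ v₁ ≤ k ∧ 1 ≤ v₂ ∧ v₂ ≤ k ∧ v₁ + v₂ = k + 1 ∧
          y = sInf {c : ℝ | ∃ x ∈ Set.Icc 0 x₀, c = (v₁ : ℝ) * x + (v₂ : ℝ) * f x}} ≤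
        ckE ![a₁, a₂] k ∧
      (volume (triangleProfile a₁ a₂)).toReal ≤
        (volume {p : ℝ × ℝ | 0 ≤ p.1 ∧ p.1 ≤ x₀ ∧ 0 ≤ p.2 ∧ p.2 ≤ f p.1}).toReal ∧
      sSup {y : ℝ | ∃ v₁ v₂ : ℕ, 1 ≤ v₁ ∧ v₁ ≤ k ∧ 1 ≤ v₂ ∧ v₂ ≤ k ∧ v₁ + v₂ = k + 1 ∧
          y = sInf {c : ℝ | ∃ x ∈ Set.Icc 0 x₀, c = (v₁ : ℝ) * x + (v₂ : ℝ) * f x}} /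
        Real.sqrt (2 * (volume {p : ℝ × ℝ | 0 ≤ p.1 ∧ p.1 ≤ x₀ ∧ 0 ≤ p.2 ∧ p.2 ≤ f p.1}).toReal) ≤
        Real.sqrt ((⌈(k : ℝ)/2⌉₊ : ℝ) * (⌈((k : ℝ) + 1)/2⌉₊ : ℝ)) := by
  classical
  set Ω : Set (ℝ × ℝ) := {p : ℝ × ℝ | 0 ≤ p.1 ∧ p.1 ≤ x₀ ∧ 0 ≤ p.2 ∧ p.2 ≤ f p.1} with hΩdef
  set S : Set ℝ := {y : ℝ | ∃ v₁ v₂ : ℕ, 1 ≤ v₁ ∧ v₁ ≤ k ∧ 1 ≤ v₂ ∧ v₂ ≤ k ∧ v₁ + v₂ = k + 1 ∧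
      y = sInf {c : ℝ | ∃ x ∈ Set.Icc 0 x₀, c = (v₁ : ℝ) * x + (v₂ : ℝ) * f x}} with hSdef
  have hx₀mem : x₀ ∈ Set.Icc (0:ℝ) x₀ := Set.right_mem_Icc.mpr (le_of_lt hx₀)
  have hf0 : ∀ x ∈ Set.Icc (0:ℝ) x₀, 0 ≤ f x := fun x hx =>
    hend ▸ hanti hx hx₀mem hx.2
  -- S is nonempty and finite
  have hSne : S.Nonempty := ⟨_, 1, k, le_refl 1, hk, hk, le_refl k, by omega, rfl⟩
  have hSfin : S.Finite := by
    apply Set.Finite.subset ((Set.finite_Icc 1 k).image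
      (fun w : ℕ => sInf {c : ℝ | ∃ x ∈ Set.Icc 0 x₀, c = (w : ℝ) * x + (Nat.cast (k+1-w) : ℝ) * f x}))
    rintro y ⟨v₁, v₂, h1, h2, h3, h4, h5, rfl⟩
    refine ⟨v₁, Set.mem_Icc.mpr ⟨h1, h2⟩, ?_⟩
    beta_reduce
    rw [show k+1-v₁ = v₂ from by omega]
  obtain ⟨v₁, v₂, hv1, hv1k, hv2, hv2k, hvs, hMeq⟩ := hSne.csSup_mem hSfin
  set m : ℝ := sInf {c : ℝ | ∃ x ∈ Set.Icc 0 x₀, c = (v₁ : ℝ) * x + (v₂ : ℝ) * f x} with hmdef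
  have hv1R : (0:ℝ) < v₁ := by exact_mod_cast hv1
  have hv2R : (0:ℝ) < v₂ := by exact_mod_cast hv2
  have hTne : {c : ℝ | ∃ x ∈ Set.Icc 0 x₀, c = (v₁ : ℝ) * x + (v₂ : ℝ) * f x}.Nonempty :=
    ⟨_, x₀, hx₀mem, rfl⟩
  have hTbdd : BddBelow {c : ℝ | ∃ x ∈ Set.Icc 0 x₀, c = (v₁ : ℝ) * x + (v₂ : ℝ) * f x} := by
    refine ⟨0, ?_⟩
    rintro c ⟨x, hx, rfl⟩
    have := hf0 x hx
    have := hx.1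
    positivity
  have hmub : ∀ x ∈ Set.Icc (0:ℝ) x₀, m ≤ (v₁ : ℝ) * x + (v₂ : ℝ) * f x :=
    fun x hx => csInf_le hTbdd ⟨x, hx, rfl⟩
  have hm0 : 0 < m := by
    have hhalf : (0:ℝ) < x₀/2 := by linarith
    have hfhalf : 0 < f (x₀/2) := hpos _ ⟨le_of_lt hhalf, by linarith⟩
    have : ∀ c ∈ {c : ℝ | ∃ x ∈ Set.Icc 0 x₀, c = (v₁ : ℝ) * x + (v₂ : ℝ) * f x},
        min ((v₁:ℝ) * (x₀/2)) ((v₂:ℝ) * f (x₀/2)) ≤ c := by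
      rintro c ⟨x, hx, rfl⟩
      rcases le_total x (x₀/2) with h | h
      · have hfx : f (x₀/2) ≤ f x := hanti hx ⟨le_of_lt hhalf, by linarith⟩ h
        have : (v₂:ℝ) * f (x₀/2) ≤ (v₂:ℝ) * f x := by nlinarith
        have hx1 := hx.1
        calc min ((v₁:ℝ) * (x₀/2)) ((v₂:ℝ) * f (x₀/2)) ≤ (v₂:ℝ) * f (x₀/2) := min_le_right _ _
          _ ≤ (v₁:ℝ) * x + (v₂:ℝ) * f x := by nlinarith
      · have hfx := hf0 x hx
        calc min ((v₁:ℝ) * (x₀/2)) ((v₂:ℝ) * f (x₀/2)) ≤ (v₁:ℝ) * (x₀/2) := min_le_left _ _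
          _ ≤ (v₁:ℝ) * x + (v₂:ℝ) * f x := by nlinarith
    have := le_csInf hTne this
    have hpos' : 0 < min ((v₁:ℝ) * (x₀/2)) ((v₂:ℝ) * f (x₀/2)) := lt_min (by positivity) (by positivity)
    linarith [hpos'.trans_le this]
  set a₁ : ℝ := m / v₁ with ha₁def
  set a₂ : ℝ := m / v₂ with ha₂def
  have ha₁ : 0 < a₁ := by positivity
  have ha₂ : 0 < a₂ := by positivity
  have hva₁ : (v₁:ℝ) * a₁ = m := by rw [ha₁def]; field_simp
  have hva₂ : (v₂:ℝ) * a₂ = m := by rw [ha₂def]; field_simp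
  -- the subset property
  have hsub : triangleProfile a₁ a₂ ⊆ Ω := by
    rintro ⟨x, y⟩ ⟨hx0, hy0, hxy⟩
    dsimp only at hx0 hy0 hxy
    have key : (v₁:ℝ) * x + (v₂:ℝ) * y ≤ m := by
      have e1 : x / a₁ = (v₁:ℝ) * x / m := by
        rw [ha₁def, div_div_eq_mul_div, mul_comm]
      have e2 : y / a₂ = (v₂:ℝ) * y / m := by
        rw [ha₂def, div_div_eq_mul_div, mul_comm]
      rw [e1, e2, ← add_div, div_le_one hm0] at hxy
      exact hxy
    have hxx₀ : x ≤ x₀ := by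
      have h1 : m ≤ (v₁:ℝ) * x₀ := by
        have := hmub x₀ hx₀mem
        rw [hend] at this
        linarith
      have h2 : (v₁:ℝ) * x ≤ m := by nlinarith
      nlinarith
    have hyf : y ≤ f x := by
      have h1 : m ≤ (v₁:ℝ) * x + (v₂:ℝ) * f x := hmub x ⟨hx0, hxx₀⟩
      nlinarith
    exact ⟨hx0, hxx₀, hy0, hyf⟩
  -- finiteness of volume of Ω
  have hΩfin : volume Ω ≠ ⊤ := by
    have hsub2 : Ω ⊆ Set.Icc ((0:ℝ), (0:ℝ)) (x₀, f 0) := by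
      rintro ⟨x, y⟩ ⟨hx0, hxx, hy0, hyf⟩
      have hf0x : f x ≤ f 0 := hanti (Set.left_mem_Icc.mpr (le_of_lt hx₀)) ⟨hx0, hxx⟩ hx0
      exact ⟨⟨hx0, hy0⟩, ⟨hxx, le_trans hyf hf0x⟩⟩
    exact ne_top_of_le_ne_top (IsCompact.measure_lt_top isCompact_Icc).ne (measure_mono hsub2)
  -- area lower bound
  have hvol_lb : a₁ * a₂ / 2 ≤ (volume Ω).toReal := by
    have h1 : ENNReal.ofReal (a₁ * a₂ / 2) ≤ volume Ω :=
      le_trans (triangle_vol_lb a₁ a₂ ha₁ ha₂) (measure_mono hsub)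
    have := ENNReal.toReal_mono hΩfin h1
    rwa [ENNReal.toReal_ofReal (by positivity)] at this
  -- the ckE lower bound
  have hckE : m ≤ ckE ![a₁, a₂] k := by
    unfold ckE
    apply le_csInf
    · refine ⟨(k:ℝ) * a₁, ?_⟩
      show k ≤ Set.ncard {p : ℕ × Fin 2 | 1 ≤ p.1 ∧ (p.1:ℝ) * ![a₁,a₂] p.2 ≤ (k:ℝ)*a₁}
      have hfin : {p : ℕ × Fin 2 | 1 ≤ p.1 ∧ (p.1:ℝ) * ![a₁,a₂] p.2 ≤ (k:ℝ)*a₁}.Finite := by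
        apply Set.Finite.subset ((Set.finite_Icc 1 ⌈(k:ℝ)*a₁ / min a₁ a₂⌉₊).prod Set.finite_univ)
        rintro ⟨j, i⟩ ⟨hj, hjc⟩
        have hmin : min a₁ a₂ ≤ ![a₁,a₂] i := by
          fin_cases i <;> simp [min_le_left, min_le_right]
        have hminpos : 0 < min a₁ a₂ := lt_min ha₁ ha₂
        have hjle : (j:ℝ) ≤ (k:ℝ)*a₁ / min a₁ a₂ := by
          rw [le_div_iff₀ hminpos]
          calc (j:ℝ) * min a₁ a₂ ≤ (j:ℝ) * ![a₁,a₂] i := by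
                have : (0:ℝ) ≤ j := Nat.cast_nonneg j
                nlinarith
            _ ≤ (k:ℝ)*a₁ := hjc
        have : j ≤ ⌈(k:ℝ)*a₁ / min a₁ a₂⌉₊ := by
          exact_mod_cast hjle.trans (Nat.le_ceil _)
        exact ⟨Set.mem_Icc.mpr ⟨hj, this⟩, Set.mem_univ _⟩
      have himg : (fun j => (j, (0 : Fin 2))) '' (Set.Icc 1 k) ⊆
          {p : ℕ × Fin 2 | 1 ≤ p.1 ∧ (p.1:ℝ) * ![a₁,a₂] p.2 ≤ (k:ℝ)*a₁} := by
        rintro ⟨j, i⟩ ⟨j', hj', hj'e⟩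
        obtain ⟨rfl, rfl⟩ : j' = j ∧ (0 : Fin 2) = i := Prod.mk_inj.mp hj'e
        rw [Set.mem_Icc] at hj'
        refine ⟨hj'.1, ?_⟩
        have : (j':ℝ) ≤ (k:ℝ) := by exact_mod_cast hj'.2
        simp only [Matrix.cons_val_zero]
        nlinarith
      calc k = ((fun j => (j, (0 : Fin 2))) '' (Set.Icc 1 k)).ncard := by
            rw [Set.ncard_image_of_injective _ (fun x y h => (Prod.mk_inj.mp h).1)]
            rw [← Finset.coe_Icc, Set.ncard_coe_finset, Nat.card_Icc]
            omega
        _ ≤ _ := Set.ncard_le_ncard himg hfin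
    · rintro c hc
      by_contra hlt
      push_neg at hlt
      have hsubG : {p : ℕ × Fin 2 | 1 ≤ p.1 ∧ (p.1:ℝ) * ![a₁,a₂] p.2 ≤ c} ⊆
          (fun j => (j, (0 : Fin 2))) '' (Set.Icc 1 (v₁-1)) ∪
          (fun j => (j, (1 : Fin 2))) '' (Set.Icc 1 (v₂-1)) := by
        rintro ⟨j, i⟩ ⟨hj, hjc⟩
        fin_cases i
        · left
          simp only [Matrix.cons_val_zero] at hjc
          have : (j:ℝ) * a₁ < (v₁:ℝ) * a₁ := by rw [hva₁]; exact lt_of_le_of_lt hjc hlt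
          have hjv : j < v₁ := by
            by_contra hge
            push_neg at hge
            have : (v₁:ℝ) ≤ (j:ℝ) := by exact_mod_cast hge
            nlinarith
          exact ⟨j, Set.mem_Icc.mpr ⟨hj, by omega⟩, rfl⟩
        · right
          simp only [Matrix.cons_val_one, Matrix.head_cons] at hjc
          have : (j:ℝ) * a₂ < (v₂:ℝ) * a₂ := by rw [hva₂]; exact lt_of_le_of_lt hjc hlt
          have hjv : j < v₂ := by
            by_contra hge
            push_neg at hge
            have : (v₂:ℝ) ≤ (j:ℝ) := by exact_mod_cast hge
            nlinarith
          exact ⟨j, Set.mem_Icc.mpr ⟨hj, by omega⟩, rfl⟩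
      have hGfin : ((fun j => (j, (0 : Fin 2))) '' (Set.Icc 1 (v₁-1)) ∪
          (fun j => (j, (1 : Fin 2))) '' (Set.Icc 1 (v₂-1))).Finite :=
        ((Set.finite_Icc _ _).image _).union ((Set.finite_Icc _ _).image _)
      have hcount : {p : ℕ × Fin 2 | 1 ≤ p.1 ∧ (p.1:ℝ) * ![a₁,a₂] p.2 ≤ c}.ncard ≤
          (v₁ - 1) + (v₂ - 1) := by
        calc {p : ℕ × Fin 2 | 1 ≤ p.1 ∧ (p.1:ℝ) * ![a₁,a₂] p.2 ≤ c}.ncard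
            ≤ ((fun j => (j, (0 : Fin 2))) '' (Set.Icc 1 (v₁-1)) ∪
              (fun j => (j, (1 : Fin 2))) '' (Set.Icc 1 (v₂-1))).ncard :=
              Set.ncard_le_ncard hsubG hGfin
          _ ≤ ((fun j => (j, (0 : Fin 2))) '' (Set.Icc 1 (v₁-1))).ncard +
              ((fun j => (j, (1 : Fin 2))) '' (Set.Icc 1 (v₂-1))).ncard := Set.ncard_union_le _ _
          _ ≤ (v₁ - 1) + (v₂ - 1) := by
              rw [Set.ncard_image_of_injective _ (fun x y h => (Prod.mk_inj.mp h).1),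
                  Set.ncard_image_of_injective _ (fun x y h => (Prod.mk_inj.mp h).1),
                  ← Finset.coe_Icc, Set.ncard_coe_finset, Nat.card_Icc,
                  ← Finset.coe_Icc, Set.ncard_coe_finset, Nat.card_Icc]
              omega
      have hkk := hc
      simp only [Set.mem_setOf_eq] at hkk
      have := le_trans hkk hcount
      omega
  refine ⟨a₁, a₂, ha₁, ha₂, hsub, ?_, ?_, ?_⟩
  · rw [hMeq]; exact hckE
  · exact ENNReal.toReal_mono hΩfin (measure_mono hsub)
  · rw [hMeq]
    set A : ℝ := (volume Ω).toReal with hA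
    have hA0 : 0 < A := lt_of_lt_of_le (by positivity) hvol_lb
    have hcl1 : ⌈(k:ℝ)/2⌉₊ = (k+1)/2 := ceil_half_nat k
    have hcl2 : ⌈((k:ℝ)+1)/2⌉₊ = (k+2)/2 := by
      have : ((k:ℝ)+1) = ((k+1 : ℕ):ℝ) := by push_cast; ring
      rw [this, ceil_half_nat]
    have hprod : (v₁:ℝ) * (v₂:ℝ) ≤ (⌈(k:ℝ)/2⌉₊ : ℝ) * (⌈((k:ℝ)+1)/2⌉₊ : ℝ) := by
      rw [hcl1, hcl2]
      exact_mod_cast prod_le_balanced k v₁ v₂ hv1 hv2 hvs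
    have hm2 : m^2 ≤ 2 * A * ((⌈(k:ℝ)/2⌉₊ : ℝ) * (⌈((k:ℝ)+1)/2⌉₊ : ℝ)) := by
      have e : m^2 = ((v₁:ℝ) * (v₂:ℝ)) * (a₁ * a₂) := by
        rw [show ((v₁:ℝ) * (v₂:ℝ)) * (a₁ * a₂) = ((v₁:ℝ)*a₁)*((v₂:ℝ)*a₂) by ring, hva₁, hva₂, sq]
      have h2A : a₁ * a₂ ≤ 2 * A := by linarith
      calc m^2 = ((v₁:ℝ) * (v₂:ℝ)) * (a₁ * a₂) := e
        _ ≤ ((⌈(k:ℝ)/2⌉₊ : ℝ) * (⌈((k:ℝ)+1)/2⌉₊ : ℝ)) * (2 * A) := by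
            apply mul_le_mul hprod h2A (by positivity)
            positivity
        _ = 2 * A * ((⌈(k:ℝ)/2⌉₊ : ℝ) * (⌈((k:ℝ)+1)/2⌉₊ : ℝ)) := by ring
    rw [div_le_iff₀ (Real.sqrt_pos.mpr (by linarith))]
    calc m = Real.sqrt (m^2) := (Real.sqrt_sq hm0.le).symm
      _ ≤ Real.sqrt ((2*A) * ((⌈(k:ℝ)/2⌉₊ : ℝ) * (⌈((k:ℝ)+1)/2⌉₊ : ℝ))) := by
          apply Real.sqrt_le_sqrt; linarith
      _ = Real.sqrt ((⌈(k:ℝ)/2⌉₊ : ℝ) * (⌈((k:ℝ)+1)/2⌉₊ : ℝ)) * Real.sqrt (2*A) := by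
          rw [Real.sqrt_mul (by positivity), mul_comm]
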